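/- Let N be a binary phylogenetic network and (i,j) a reticulated-cherry of N with p, q the parents of i, j respectively. Then for every tree node u of N other than q, the extended μ-vector of u in the reduced network N^{(i,j)} satisfies μ^{N^{(i,j)}}_i(u) = μ^N_i(u) − μ^N_j(u), μ^{N^{(i,j)}}_0(u) = μ^N_0(u) − μ^N_i(u), and μ^{N^{(i,j)}}_k(u) = μ^N_k(u) for all k ∉ {0,i}. Hence 𝛍(N^{(i,j)}) = 𝛍(N)^{(i,j)}. -/

import Mathlib

open Relation

/-- A (candidate) binary phylogenetic network: a finite directed graph with
leaf labels in a taxon set `X ⊆ [n] = {1,…,n}`. Well-formedness is `Valid`. -/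
structure BPN (n : ℕ) where
  V : Type
  [instFin : Fintype V]
  [instDec : DecidableEq V]
  arc : V → V → Prop
  X : Finset ℕ
  label : V → ℕ

namespace BPN

attribute [instance] BPN.instFin BPN.instDec

variable {n : ℕ}

noncomputable def indeg (N : BPN n) (u : N.V) : ℕ := Nat.card {v : N.V // N.arc v u}
noncomputable def outdeg (N : BPN n) (u : N.V) : ℕ := Nat.card {v : N.V // N.arc u v}

def isRoot (N : BPN n) (u : N.V) : Prop := N.indeg u = 0 ∧ N.outdeg u = 1
def isLeaf (N : BPN n) (u : N.V) : Prop := N.indeg u = 1 ∧ N.outdeg u = 0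
def isTree (N : BPN n) (u : N.V) : Prop := N.indeg u = 1 ∧ N.outdeg u = 2
def isRetic (N : BPN n) (u : N.V) : Prop := N.indeg u = 2 ∧ N.outdeg u = 1
/-- leaves together with tree nodes -/
def isVT (N : BPN n) (u : N.V) : Prop := N.isLeaf u ∨ N.isTree u

/-- Well-formedness of a binary phylogenetic network on `X ⊆ [n]`:
acyclic, every node is a root/leaf/tree node/reticulation, unique root,
and the leaves are bijectively labeled by `X`. -/
def Valid (N : BPN n) : Prop :=
  (∀ u v : N.V, ReflTransGen N.arc u v → ReflTransGen N.arc v u → u = v) ∧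
  (∀ u : N.V, N.isRoot u ∨ N.isLeaf u ∨ N.isTree u ∨ N.isRetic u) ∧
  (∃! r : N.V, N.isRoot r) ∧
  (∀ u : N.V, N.isLeaf u → N.label u ∈ N.X ∧ 1 ≤ N.label u ∧ N.label u ≤ n) ∧
  (∀ u v : N.V, N.isLeaf u → N.isLeaf v → N.label u = N.label v → u = v) ∧
  (∀ i ∈ N.X, ∃ u : N.V, N.isLeaf u ∧ N.label u = i)

/-- `IsPath N u v l` : `l` is the list of nodes visited (after `u`) by a
directed path from `u` to `v`; the trivial path is `[]`. -/
inductive IsPath (N : BPN n) : N.V → N.V → List N.V → Prop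
  | nil (u : N.V) : IsPath N u u []
  | cons {u v w : N.V} {l : List N.V} : N.arc u v → IsPath N v w l → IsPath N u w (v :: l)

/-- the number `m(u,v)` of directed paths from `u` to `v` -/
noncomputable def m (N : BPN n) (u v : N.V) : ℕ := Nat.card {l : List N.V // N.IsPath u v l}

open Classical in
/-- the extended μ-vector: position `0` counts paths to reticulations,
position `k ≥ 1` counts paths to the leaf labeled `k`. -/
noncomputable def mu (N : BPN n) (u : N.V) : Fin (n + 1) → ℕ := fun k =>
  if k = 0 then ∑ h ∈ Finset.univ.filter (fun h => N.isRetic h), N.m u h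
  else ∑ v ∈ Finset.univ.filter (fun v => N.isLeaf v ∧ N.label v = (k : ℕ)), N.m u v

/-- `delta S` is the 0/1 vector with `1` exactly in the positions of `S`. -/
def delta (S : Finset (Fin (n + 1))) : Fin (n + 1) → ℕ := fun k => if k ∈ S then 1 else 0

open Classical in
/-- the extended μ-representation: the multiset of μ-vectors of leaves and tree nodes -/
noncomputable def muRep (N : BPN n) : Multiset (Fin (n + 1) → ℕ) :=
  (Finset.univ.filter (fun u => N.isVT u)).val.map N.mu

/-- `(i,j)` is a cherry realized by the leaves `xi, xj` with common parent `p`. -/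
def IsCherry (N : BPN n) (i j : Fin (n + 1)) (xi xj p : N.V) : Prop :=
  N.isLeaf xi ∧ N.label xi = (i : ℕ) ∧ N.isLeaf xj ∧ N.label xj = (j : ℕ) ∧
  xi ≠ xj ∧ N.arc p xi ∧ N.arc p xj

/-- `(i,j)` is a reticulated-cherry: the parent `p` of leaf `xi` is a reticulation,
the parent `q` of leaf `xj` is a tree node, and there is an arc from `q` to `p`. -/
def IsRetCherry (N : BPN n) (i j : Fin (n + 1)) (xi xj p q : N.V) : Prop :=
  N.isLeaf xi ∧ N.label xi = (i : ℕ) ∧ N.isLeaf xj ∧ N.label xj = (j : ℕ) ∧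
  xi ≠ xj ∧ N.arc p xi ∧ N.arc q xj ∧ N.isRetic p ∧ N.isTree q ∧ N.arc q p

/-- Cherry reduction: remove leaf `xi` and suppress the elementary node `p`
(connecting the parent of `p` directly to `xj`). -/
def cherryReduce (N : BPN n) (xi xj p : N.V) : BPN n where
  V := {v : N.V // v ≠ xi ∧ v ≠ p}
  arc u v := N.arc u.1 v.1 ∨ (N.arc u.1 p ∧ v.1 = xj)
  X := N.X.erase (N.label xi)
  label v := N.label v.1

/-- Reticulated-cherry reduction: delete the arc `q → p` and suppress the
elementary nodes `p` (connecting its other parent to `xi`) and `q`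
(connecting its parent to `xj`). -/
def retCherryReduce (N : BPN n) (xi xj p q : N.V) : BPN n where
  V := {v : N.V // v ≠ p ∧ v ≠ q}
  arc u v := N.arc u.1 v.1 ∨ (N.arc u.1 p ∧ v.1 = xi) ∨ (N.arc u.1 q ∧ v.1 = xj)
  X := N.X
  label v := N.label v.1

/-- Isomorphism of labeled networks: digraph isomorphism preserving leaf labels. -/
def Iso (N M : BPN n) : Prop :=
  ∃ f : N.V ≃ M.V, (∀ u v : N.V, N.arc u v ↔ M.arc (f u) (f v)) ∧
    ∀ u : N.V, N.isLeaf u → M.label (f u) = N.label u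

/-- `N` reduces in one step by the pair `s` to (an isomorphic copy of) `M`. -/
def ReducesTo (N : BPN n) (s : Fin (n + 1) × Fin (n + 1)) (M : BPN n) : Prop :=
  (∃ xi xj p, N.IsCherry s.1 s.2 xi xj p ∧ Iso (N.cherryReduce xi xj p) M) ∨
  (∃ xi xj p q, N.IsRetCherry s.1 s.2 xi xj p q ∧ Iso (N.retCherryReduce xi xj p q) M)

/-- `ReducesSeq N S M` : the sequence of pairs `S` is reducible in `N` and reduces it to `M`. -/
inductive ReducesSeq : BPN n → List (Fin (n + 1) × Fin (n + 1)) → BPN n → Prop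
  | nil (N : BPN n) : ReducesSeq N [] N
  | cons {N M P : BPN n} {s S} : ReducesTo N s M → ReducesSeq M S P → ReducesSeq N (s :: S) P

/-- the trivial network `I_i`: a root and a single leaf labeled `i` -/
def IsTrivial (N : BPN n) (i : Fin (n + 1)) : Prop :=
  ∃ r u : N.V, r ≠ u ∧ N.arc r u ∧ N.isLeaf u ∧ N.label u = (i : ℕ) ∧ ∀ v : N.V, v = r ∨ v = u

/-- orchard networks: valid networks admitting a complete reduction sequence -/
def IsOrchard (N : BPN n) : Prop :=
  N.Valid ∧ ∃ S M i, ReducesSeq N S M ∧ IsTrivial M i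

/-- cherry-reduction of a multiset of vectors -/
def cherryRed (i j : Fin (n + 1)) (M : Multiset (Fin (n + 1) → ℕ)) :
    Multiset (Fin (n + 1) → ℕ) :=
  ((M.erase (delta {i})).erase (delta {i, j})).map fun μ k => if k = i then 0 else μ k

/-- reticulated-cherry-reduction of a multiset of vectors -/
def retCherryRed (i j : Fin (n + 1)) (M : Multiset (Fin (n + 1) → ℕ)) :
    Multiset (Fin (n + 1) → ℕ) :=
  (M.erase (delta {0, i, j})).map fun μ k =>
    if k = 0 then μ 0 - μ i else if k = i then μ i - μ j else μ k

/-- `(i,j)` is a cherry of a multiset of vectors -/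
def IsCherryM (i j : Fin (n + 1)) (M : Multiset (Fin (n + 1) → ℕ)) : Prop :=
  M.count (delta {i, j}) = 1 ∧ ∀ μ ∈ M, μ ≠ delta {i} → μ ≠ delta {j} → μ i = μ j

/-- `(i,j)` is a reticulated-cherry of a multiset of vectors -/
def IsRetCherryM (i j : Fin (n + 1)) (M : Multiset (Fin (n + 1) → ℕ)) : Prop :=
  M.count (delta {0, i, j}) = 1 ∧
    ∀ μ ∈ M, μ ≠ delta {i} → μ ≠ delta {j} → μ j ≤ μ i ∧ μ i ≤ μ 0

/-- one reduction step on multisets of vectors -/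
inductive MStep :
    Multiset (Fin (n + 1) → ℕ) → Fin (n + 1) × Fin (n + 1) → Multiset (Fin (n + 1) → ℕ) → Prop
  | cherry {M : Multiset (Fin (n + 1) → ℕ)} {i j} :
      IsCherryM i j M → MStep M (i, j) (cherryRed i j M)
  | ret {M : Multiset (Fin (n + 1) → ℕ)} {i j} :
      IsRetCherryM i j M → MStep M (i, j) (retCherryRed i j M)

/-- reduction of a multiset of vectors by a sequence of pairs -/
inductive MSeq :
    Multiset (Fin (n + 1) → ℕ) → List (Fin (n + 1) × Fin (n + 1)) → Multiset (Fin (n + 1) → ℕ) → Prop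
  | nil (M : Multiset (Fin (n + 1) → ℕ)) : MSeq M [] M
  | cons {M M' M'' : Multiset (Fin (n + 1) → ℕ)} {s S} :
      MStep M s M' → MSeq M' S M'' → MSeq M (s :: S) M''

open Classical in
/-- the μ-distance: cardinality of the symmetric difference of the μ-representations -/
noncomputable def dmu (N M : BPN n) : ℕ :=
  (symmDiff N.muRep.toFinset M.muRep.toFinset).card

end BPN

open Relation
namespace BPN
variable {n : ℕ} {M : BPN n}

lemma IsPath.reflTransGen {u v : M.V} {l : List M.V} (h : M.IsPath u v l) :
    ReflTransGen M.arc u v := by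
  induction h with
  | nil => exact .refl
  | cons ha _ ih => exact .head ha ih

lemma isPath_target_unique {u a b : M.V} {l : List M.V} (h1 : M.IsPath u a l)
    (h2 : M.IsPath u b l) : a = b := by
  induction l generalizing u with
  | nil => cases h1; cases h2; rfl
  | cons c t ih =>
    cases h1 with | cons ha hp1 =>
    cases h2 with | cons hb hp2 =>
    exact ih hp1 hp2

lemma isPath_concat_iff {u v w : M.V} {l : List M.V} :
    M.IsPath u v (l ++ [w]) ↔ v = w ∧ ∃ z, M.IsPath u z l ∧ M.arc z w := by
  induction l generalizing u with
  | nil =>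
    constructor
    · intro h
      cases h with | cons ha hp => cases hp; exact ⟨rfl, u, .nil u, ha⟩
    · rintro ⟨rfl, z, hz, ha⟩
      cases hz
      exact .cons ha (.nil _)
  | cons c t ih =>
    constructor
    · intro h
      cases h with | cons ha hp =>
        obtain ⟨rfl, z, hz, haz⟩ := ih.1 hp
        exact ⟨rfl, z, .cons ha hz, haz⟩
    · rintro ⟨rfl, z, hz, haz⟩
      cases hz with | cons ha hz' => exact .cons ha (ih.2 ⟨rfl, z, hz', haz⟩)

lemma isPath_decomp {u v : M.V} {l : List M.V} (h : M.IsPath u v l) (hl : l ≠ []) :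
    ∃ l₁ z, l = l₁ ++ [v] ∧ M.IsPath u z l₁ ∧ M.arc z v := by
  obtain ⟨l₁, w, rfl⟩ := l.eq_nil_or_concat.resolve_left hl
  rw [List.concat_eq_append] at h ⊢
  obtain ⟨rfl, z, hz, ha⟩ := isPath_concat_iff.1 h
  exact ⟨l₁, z, rfl, hz, ha⟩

lemma mem_path_reachable {a v x : M.V} {l : List M.V} (h : M.IsPath a v l) (hx : x ∈ l) :
    ReflTransGen M.arc a x := by
  induction h with
  | nil => cases hx
  | cons ha hp ih =>
    rcases List.mem_cons.1 hx with rfl | hx'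
    · exact ReflTransGen.single ha
    · exact (ReflTransGen.single ha).trans (ih hx')

lemma isPath_fixed {w v : M.V} {l : List M.V} (hw : ∀ z, M.arc w z → z = w)
    (h : M.IsPath w v l) : v = w := by
  induction l generalizing w with
  | nil => cases h; rfl
  | cons c t ih =>
    cases h with | cons ha hp =>
    cases hw _ ha
    exact ih hw hp
end BPN

namespace BPN
variable {n : ℕ} {M : BPN n}

lemma m_eq_of_unique_parent {u v w : M.V} (huv : u ≠ v) (hwv : M.arc w v)
    (huniq : ∀ z, M.arc z v → z = w) : M.m u v = M.m u w := by
  have key : ∀ l, M.IsPath u v l → l = l.dropLast ++ [v] ∧ M.IsPath u w l.dropLast := by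
    intro l hl
    have hne : l ≠ [] := by rintro rfl; cases hl; exact huv rfl
    obtain ⟨l₁, z, rfl, hz, ha⟩ := isPath_decomp hl hne
    rw [List.dropLast_concat]
    exact ⟨rfl, (huniq z ha) ▸ hz⟩
  refine (Nat.card_eq_of_bijective (fun l => ⟨l.1.dropLast, (key l.1 l.2).2⟩) ⟨?_, ?_⟩)
  · rintro ⟨l1, h1⟩ ⟨l2, h2⟩ he
    simp only [Subtype.mk.injEq] at he ⊢
    rw [(key l1 h1).1, (key l2 h2).1, he]
  · rintro ⟨l₁, h₁⟩
    refine ⟨⟨l₁ ++ [v], isPath_concat_iff.2 ⟨rfl, w, h₁, hwv⟩⟩, ?_⟩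
    simp [List.dropLast_concat]

lemma m_eq_zero_of_no_path {u v : M.V} (h : ∀ l, ¬ M.IsPath u v l) : M.m u v = 0 := by
  rw [m, Nat.card_eq_zero]; exact Or.inl ⟨fun l => h l.1 l.2⟩

lemma m_eq_zero_of_no_out {u v : M.V} (huv : u ≠ v) (h : ∀ z, ¬ M.arc u z) : M.m u v = 0 :=
  m_eq_zero_of_no_path fun l hl => by
    cases hl with
    | nil => exact huv rfl
    | cons ha _ => exact h _ ha

lemma m_self_of_no_out {u : M.V} (h : ∀ z, ¬ M.arc u z) : M.m u u = 1 := by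
  rw [m, Nat.card_eq_one_iff_exists]
  refine ⟨⟨[], .nil u⟩, ?_⟩
  rintro ⟨l, hl⟩
  cases hl with
  | nil => rfl
  | cons ha _ => exact absurd ha (h _)

lemma m_self_eq_one (hac : ∀ a b : M.V, ReflTransGen M.arc a b → ReflTransGen M.arc b a → a = b)
    {u : M.V} (hu : ¬ M.arc u u) : M.m u u = 1 := by
  rw [m, Nat.card_eq_one_iff_exists]
  refine ⟨⟨[], .nil u⟩, ?_⟩
  rintro ⟨l, hl⟩
  have : l = [] := by
    cases hl with
    | nil => rfl
    | cons ha hp =>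
      have hb := hac _ _ hp.reflTransGen (ReflTransGen.single ha)
      rw [hb] at ha
      exact absurd ha hu
  simp [this]

lemma m_eq_zero_of_loop {u v : M.V} (h : M.arc u u) : M.m u v = 0 := by
  by_cases hp : ∃ l, M.IsPath u v l
  · obtain ⟨l₀, hl₀⟩ := hp
    have hrep : ∀ k : ℕ, M.IsPath u v (List.replicate k u ++ l₀) := by
      intro k
      induction k with
      | zero => simpa using hl₀
      | succ k ih => exact .cons h (by simpa [List.replicate_succ] using ih)
    have : Infinite {l : List M.V // M.IsPath u v l} := by
      apply Infinite.of_injective (fun k : ℕ => (⟨List.replicate k u ++ l₀, hrep k⟩ : {l // M.IsPath u v l}))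
      intro a b hab
      have := congrArg (fun s : {l // M.IsPath u v l} => s.1.length) hab
      simpa using this
    rw [m]
    exact Nat.card_eq_zero_of_infinite
  · exact m_eq_zero_of_no_path (fun l hl => hp ⟨l, hl⟩)

lemma no_path_of_only_self_parent {u v : M.V} (huv : u ≠ v) (h : ∀ z, M.arc z v → z = v) :
    ∀ l, ¬ M.IsPath u v l := by
  have key : ∀ k (l : List M.V), l.length ≤ k → ¬ M.IsPath u v l := by
    intro k
    induction k with
    | zero =>
      intro l hlen hl
      rw [Nat.le_zero, List.length_eq_zero_iff] at hlen
      subst hlen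
      cases hl
      exact huv rfl
    | succ k ih =>
      intro l hlen hl
      rcases eq_or_ne l [] with rfl | hne
      · cases hl; exact huv rfl
      · obtain ⟨l₁, z, rfl, hz, ha⟩ := isPath_decomp hl hne
        cases h z ha
        refine ih l₁ ?_ hz
        have : l₁.length + 1 ≤ k + 1 := by simpa using hlen
        omega
  exact fun l => key l.length l le_rfl

lemma m_eq_zero_of_only_self_parent {u v : M.V} (huv : u ≠ v) (h : ∀ z, M.arc z v → z = v) :
    M.m u v = 0 :=
  m_eq_zero_of_no_path (no_path_of_only_self_parent huv h)

end BPN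

namespace BPN
variable {n : ℕ} {M : BPN n}

lemma no_in_of_indeg_zero {u : M.V} (h : M.indeg u = 0) : ∀ z, ¬ M.arc z u := by
  rw [indeg, Nat.card_eq_zero] at h
  rcases h with h | h
  · exact fun z hz => h.elim' ⟨z, hz⟩
  · exact absurd Subtype.finite ((@not_finite_iff_infinite {v // M.arc v u}).2 h)

lemma no_out_of_outdeg_zero {u : M.V} (h : M.outdeg u = 0) : ∀ z, ¬ M.arc u z := by
  rw [outdeg, Nat.card_eq_zero] at h
  rcases h with h | h
  · exact fun z hz => h.elim' ⟨z, hz⟩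
  · exact absurd Subtype.finite ((@not_finite_iff_infinite {v // M.arc u v}).2 h)

lemma parent_unique {u w : M.V} (h : M.indeg u = 1) (hw : M.arc w u) :
    ∀ z, M.arc z u → z = w := by
  rw [indeg, Nat.card_eq_one_iff_exists] at h
  obtain ⟨x, hall⟩ := h
  intro z hz
  have h1 := hall ⟨z, hz⟩
  have h2 := hall ⟨w, hw⟩
  rw [← h2] at h1
  exact congrArg Subtype.val h1

lemma parent_exists {u : M.V} (h : M.indeg u = 1) : ∃ w, M.arc w u := by
  rw [indeg, Nat.card_eq_one_iff_exists] at h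
  obtain ⟨⟨x, hx⟩, -⟩ := h
  exact ⟨x, hx⟩

lemma child_unique {u w : M.V} (h : M.outdeg u = 1) (hw : M.arc u w) :
    ∀ z, M.arc u z → z = w := by
  rw [outdeg, Nat.card_eq_one_iff_exists] at h
  obtain ⟨x, hall⟩ := h
  intro z hz
  have h1 := hall ⟨z, hz⟩
  have h2 := hall ⟨w, hw⟩
  rw [← h2] at h1
  exact congrArg Subtype.val h1

lemma parents_pair {u a : M.V} (h : M.indeg u = 2) (ha : M.arc a u) :
    ∃ b, b ≠ a ∧ M.arc b u ∧ ∀ z, M.arc z u → z = a ∨ z = b := by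
  rw [indeg, Nat.card_eq_two_iff] at h
  obtain ⟨x, y, hxy, huniv⟩ := h
  have hvals : ∀ z (hz : M.arc z u), z = x.1 ∨ z = y.1 := by
    intro z hz
    have hm : (⟨z, hz⟩ : {v // M.arc v u}) ∈ ({x, y} : Set {v // M.arc v u}) := by
      rw [huniv]; trivial
    rcases hm with hm | hm
    · exact Or.inl (congrArg Subtype.val hm)
    · exact Or.inr (congrArg Subtype.val hm)
  have hxyv : x.1 ≠ y.1 := fun he => hxy (Subtype.ext he)
  rcases hvals a ha with hax | hay
  · refine ⟨y.1, ?_, y.2, ?_⟩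
    · rw [hax]; exact hxyv.symm
    · intro z hz
      rcases hvals z hz with hz' | hz'
      · exact Or.inl (by rw [hz', hax])
      · exact Or.inr hz'
  · refine ⟨x.1, ?_, x.2, ?_⟩
    · rw [hay]; exact hxyv
    · intro z hz
      rcases hvals z hz with hz' | hz'
      · exact Or.inr hz'
      · exact Or.inl (by rw [hz', hay])

lemma children_pair {u a : M.V} (h : M.outdeg u = 2) (ha : M.arc u a) :
    ∃ b, b ≠ a ∧ M.arc u b ∧ ∀ z, M.arc u z → z = a ∨ z = b := by
  rw [outdeg, Nat.card_eq_two_iff] at h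
  obtain ⟨x, y, hxy, huniv⟩ := h
  have hvals : ∀ z (hz : M.arc u z), z = x.1 ∨ z = y.1 := by
    intro z hz
    have hm : (⟨z, hz⟩ : {v // M.arc u v}) ∈ ({x, y} : Set {v // M.arc u v}) := by
      rw [huniv]; trivial
    rcases hm with hm | hm
    · exact Or.inl (congrArg Subtype.val hm)
    · exact Or.inr (congrArg Subtype.val hm)
  have hxyv : x.1 ≠ y.1 := fun he => hxy (Subtype.ext he)
  rcases hvals a ha with hax | hay
  · refine ⟨y.1, ?_, y.2, ?_⟩
    · rw [hax]; exact hxyv.symm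
    · intro z hz
      rcases hvals z hz with hz' | hz'
      · exact Or.inl (by rw [hz', hax])
      · exact Or.inr hz'
  · refine ⟨x.1, ?_, x.2, ?_⟩
    · rw [hay]; exact hxyv
    · intro z hz
      rcases hvals z hz with hz' | hz'
      · exact Or.inr hz'
      · exact Or.inl (by rw [hz', hay])

lemma path_nodup (hM : M.Valid) {u v : M.V}
    {l : List M.V} (h : M.IsPath u v l) :
    ¬ M.arc u u → ¬ M.arc v v → (u :: l).Nodup := by
  induction h with
  | nil => intro _ _; simp
  | @cons a b w l ha hp ih =>
    intro hu hv
    have hab : a ≠ b := fun he => hu (he ▸ ha)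
    have hbb : ¬ M.arc b b := by
      intro hb
      rcases (hM.2.1 b) with hr | hr | hr | hr
      · exact no_in_of_indeg_zero hr.1 b hb
      · exact no_out_of_outdeg_zero hr.2 b hb
      · exact hab (parent_unique hr.1 hb a ha)
      · have hfix := child_unique hr.2 hb
        have hwb := isPath_fixed hfix hp
        rw [hwb] at hv
        exact hv hb
    have hnd := ih hbb hv
    rw [List.nodup_cons]
    refine ⟨?_, hnd⟩
    intro hmem
    rcases List.mem_cons.1 hmem with rfl | hmem'
    · exact hab rfl
    · have h1 := mem_path_reachable hp hmem'
      have h2 := ReflTransGen.single ha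
      exact hab (hM.1 a b h2 h1)

lemma finite_paths (hM : M.Valid) {u v : M.V} (hu : ¬ M.arc u u) (hv : ¬ M.arc v v) :
    Finite {l : List M.V // M.IsPath u v l} := by
  have hlen : ∀ l : {l : List M.V // M.IsPath u v l}, l.1.length ≤ Fintype.card M.V := by
    rintro ⟨l, hl⟩
    have := (path_nodup hM hl hu hv).length_le_card
    simpa using Nat.le_of_succ_le this
  have hfin : Finite {l : List M.V // l.length ≤ Fintype.card M.V} :=
    (List.finite_length_le (α := M.V) (Fintype.card M.V)).to_subtype
  exact Finite.of_injective
    (fun l => (⟨l.1, hlen l⟩ : {l : List M.V // l.length ≤ Fintype.card M.V}))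
    (fun a b hab => Subtype.ext (by simpa using congrArg Subtype.val hab))

lemma m_eq_add_of_two_parents {u v a b : M.V} (huv : u ≠ v) (hab : a ≠ b)
    (hav : M.arc a v) (hbv : M.arc b v) (huniq : ∀ z, M.arc z v → z = a ∨ z = b)
    (hfa : Finite {l : List M.V // M.IsPath u a l})
    (hfb : Finite {l : List M.V // M.IsPath u b l}) :
    M.m u v = M.m u a + M.m u b := by
  have := hfa; have := hfb
  rw [m, m, m, ← Nat.card_sum]
  refine (Nat.card_eq_of_bijective (fun s => match s with
    | Sum.inl l => ⟨l.1 ++ [v], isPath_concat_iff.2 ⟨rfl, a, l.2, hav⟩⟩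
    | Sum.inr l => ⟨l.1 ++ [v], isPath_concat_iff.2 ⟨rfl, b, l.2, hbv⟩⟩) ⟨?_, ?_⟩).symm
  · rintro (⟨l1, h1⟩ | ⟨l1, h1⟩) (⟨l2, h2⟩ | ⟨l2, h2⟩) he <;>
      simp only [Subtype.mk.injEq, List.append_left_inj] at he
    · simp [he]
    · subst he; exact absurd (isPath_target_unique h1 h2) hab
    · subst he; exact absurd (isPath_target_unique h1 h2) hab.symm
    · simp [he]
  · rintro ⟨l, hl⟩
    have hne : l ≠ [] := by rintro rfl; cases hl; exact huv rfl
    obtain ⟨l₁, z, rfl, hz, ha⟩ := isPath_decomp hl hne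
    rcases huniq z ha with rfl | rfl
    · exact ⟨Sum.inl ⟨l₁, hz⟩, rfl⟩
    · exact ⟨Sum.inr ⟨l₁, hz⟩, rfl⟩

end BPN

namespace BPN

variable {n : ℕ} {N : BPN n}

/-- All the structural facts around a reticulated cherry that we need. -/
structure RC (N : BPN n) (i j : Fin (n + 1)) (xi xj p q r s : N.V) : Prop where
  valid : N.Valid
  hxi : N.isLeaf xi
  hlxi : N.label xi = (i : ℕ)
  hxj : N.isLeaf xj
  hlxj : N.label xj = (j : ℕ)
  hne : xi ≠ xj
  hpxi : N.arc p xi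
  hqxj : N.arc q xj
  hp : N.isRetic p
  hq : N.isTree q
  hqp : N.arc q p
  nxi : ∀ z, ¬ N.arc xi z
  nxj : ∀ z, ¬ N.arc xj z
  pxi : p ≠ xi
  pxj : p ≠ xj
  qxi : q ≠ xi
  qxj : q ≠ xj
  hpq : p ≠ q
  cp : ∀ z, N.arc p z → z = xi
  cq : ∀ z, N.arc q z → z = p ∨ z = xj
  npp : ¬ N.arc p p
  nqq : ¬ N.arc q q
  uxi : ∀ z, N.arc z xi → z = p
  uxj : ∀ z, N.arc z xj → z = q
  hrp : N.arc r p
  hrq : r ≠ q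
  hrP : r ≠ p
  rxi : r ≠ xi
  rxj : r ≠ xj
  upar : ∀ z, N.arc z p → z = q ∨ z = r
  hsq : N.arc s q
  usq : ∀ z, N.arc z q → z = s
  sP : s ≠ p
  sQ : s ≠ q
  sxi : s ≠ xi
  sxj : s ≠ xj
  i0 : i ≠ 0
  j0 : j ≠ 0
  ij : i ≠ j
  lli : ∀ v, N.isLeaf v → N.label v = (i : ℕ) → v = xi
  llj : ∀ v, N.isLeaf v → N.label v = (j : ℕ) → v = xj

lemma mkRC {i j : Fin (n + 1)} {xi xj p q : N.V} (hN : N.Valid)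
    (h : N.IsRetCherry i j xi xj p q) : ∃ r s, RC N i j xi xj p q r s := by
  obtain ⟨hxi, hlxi, hxj, hlxj, hne, hpxi, hqxj, hp, hq, hqp⟩ := h
  have nxi : ∀ z, ¬ N.arc xi z := no_out_of_outdeg_zero hxi.2
  have nxj : ∀ z, ¬ N.arc xj z := no_out_of_outdeg_zero hxj.2
  have pxi : p ≠ xi := fun he => nxi xi (he ▸ hpxi)
  have pxj : p ≠ xj := fun he => nxj xi (he ▸ hpxi)
  have qxi : q ≠ xi := fun he => nxi xj (he ▸ hqxj)
  have qxj : q ≠ xj := fun he => nxj p (he ▸ hqp)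
  have hpq : p ≠ q := by
    intro he
    have h1 := hp.1
    rw [he, hq.1] at h1
    exact absurd h1 (by norm_num)
  have cp : ∀ z, N.arc p z → z = xi := child_unique hp.2 hpxi
  have cq : ∀ z, N.arc q z → z = p ∨ z = xj := by
    obtain ⟨b, hbp, hqb, hall⟩ := children_pair hq.2 hqp
    have hbxj : b = xj := by
      rcases hall xj hqxj with he | he
      · exact absurd he pxj.symm
      · exact he.symm
    exact fun z hz => (hall z hz).imp id (fun he => he.trans hbxj)
  have npp : ¬ N.arc p p := fun hpp => pxi (cp p hpp)
  have nqq : ¬ N.arc q q := fun hqq => by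
    rcases cq q hqq with he | he
    · exact hpq he.symm
    · exact qxj he
  have uxi : ∀ z, N.arc z xi → z = p := parent_unique hxi.1 hpxi
  have uxj : ∀ z, N.arc z xj → z = q := parent_unique hxj.1 hqxj
  obtain ⟨r, hrq, hrp, upar⟩ := parents_pair hp.1 hqp
  have hrP : r ≠ p := fun he => npp (he ▸ hrp)
  have rxi : r ≠ xi := fun he => nxi p (he ▸ hrp)
  have rxj : r ≠ xj := fun he => nxj p (he ▸ hrp)
  obtain ⟨s, hsq⟩ := parent_exists hq.1
  have usq : ∀ z, N.arc z q → z = s := parent_unique hq.1 hsq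
  have sP : s ≠ p := fun he => qxi (cp q (he ▸ hsq))
  have sQ : s ≠ q := fun he => nqq (he ▸ hsq)
  have sxi : s ≠ xi := fun he => nxi q (he ▸ hsq)
  have sxj : s ≠ xj := fun he => nxj q (he ▸ hsq)
  have i0 : i ≠ 0 := by
    intro he
    have h1 := (hN.2.2.2.1 xi hxi).2.1
    rw [hlxi, he] at h1
    simp at h1
  have j0 : j ≠ 0 := by
    intro he
    have h1 := (hN.2.2.2.1 xj hxj).2.1
    rw [hlxj, he] at h1
    simp at h1
  have ij : i ≠ j := by
    intro he
    exact hne (hN.2.2.2.2.1 xi xj hxi hxj (by rw [hlxi, hlxj, he]))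
  have lli : ∀ v, N.isLeaf v → N.label v = (i : ℕ) → v = xi :=
    fun v hv hl => hN.2.2.2.2.1 v xi hv hxi (hl.trans hlxi.symm)
  have llj : ∀ v, N.isLeaf v → N.label v = (j : ℕ) → v = xj :=
    fun v hv hl => hN.2.2.2.2.1 v xj hv hxj (hl.trans hlxj.symm)
  exact ⟨r, s, ⟨hN, hxi, hlxi, hxj, hlxj, hne, hpxi, hqxj, hp, hq, hqp, nxi, nxj, pxi, pxj,
    qxi, qxj, hpq, cp, cq, npp, nqq, uxi, uxj, hrp, hrq, hrP, rxi, rxj, upar, hsq, usq,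
    sP, sQ, sxi, sxj, i0, j0, ij, lli, llj⟩⟩

end BPN

namespace BPN

variable {n : ℕ} {N : BPN n} {i j : Fin (n + 1)} {xi xj p q r s : N.V}

lemma arc_rcr {a b : (N.retCherryReduce xi xj p q).V} :
    (N.retCherryReduce xi xj p q).arc a b ↔
      (N.arc a.1 b.1 ∨ (N.arc a.1 p ∧ b.1 = xi) ∨ (N.arc a.1 q ∧ b.1 = xj)) := Iff.rfl

lemma RC.Lxi (c : RC N i j xi xj p q r s) :
    ∀ (v : N.V) (l : List N.V), v ≠ xi → ¬ N.IsPath xi v l := by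
  intro v l hv hl
  cases hl with
  | nil => exact hv rfl
  | cons ha _ => exact c.nxi _ ha

lemma RC.Lxj (c : RC N i j xi xj p q r s) :
    ∀ (v : N.V) (l : List N.V), v ≠ xj → ¬ N.IsPath xj v l := by
  intro v l hv hl
  cases hl with
  | nil => exact hv rfl
  | cons ha _ => exact c.nxj _ ha

lemma RC.Lp (c : RC N i j xi xj p q r s) :
    ∀ (v : N.V) (l : List N.V), v ≠ p → v ≠ xi → ¬ N.IsPath p v l := by
  intro v l hv1 hv2 hl
  cases hl with
  | nil => exact hv1 rfl
  | cons ha hp' =>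
    rw [c.cp _ ha] at hp'
    exact c.Lxi v _ hv2 hp'

lemma RC.Lq (c : RC N i j xi xj p q r s) :
    ∀ (v : N.V) (l : List N.V), v ≠ q → v ≠ p → v ≠ xi → v ≠ xj → ¬ N.IsPath q v l := by
  intro v l h1 h2 h3 h4 hl
  cases hl with
  | @cons _ b _ _ ha hp' =>
    rcases c.cq b ha with he | he
    · rw [he] at hp'
      exact c.Lp v _ h2 h3 hp'
    · rw [he] at hp'
      exact c.Lxj v _ h4 hp'
  | nil => exact h1 rfl

lemma RC.avoid (c : RC N i j xi xj p q r s) :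
    ∀ (u v : N.V) (l : List N.V), N.IsPath u v l → v ≠ p → v ≠ q → v ≠ xi → v ≠ xj →
      ∀ x ∈ l, x ≠ p ∧ x ≠ q ∧ x ≠ xi ∧ x ≠ xj := by
  intro u v l hl
  induction hl with
  | nil => intro _ _ _ _ x hx; cases hx
  | @cons a b w l ha hp' ih =>
    intro h1 h2 h3 h4 x hx
    have hb : b ≠ p ∧ b ≠ q ∧ b ≠ xi ∧ b ≠ xj := by
      refine ⟨?_, ?_, ?_, ?_⟩
      · rintro rfl; exact c.Lp w l h1 h3 hp'
      · rintro rfl; exact c.Lq w l h2 h1 h3 h4 hp'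
      · rintro rfl; exact c.Lxi w l h3 hp'
      · rintro rfl; exact c.Lxj w l h4 hp'
    rcases List.mem_cons.1 hx with rfl | hx'
    · exact hb
    · exact ih h1 h2 h3 h4 x hx'

end BPN

namespace BPN

variable {n : ℕ} {N : BPN n} {i j : Fin (n + 1)} {xi xj p q r s : N.V}

lemma RC.proj (c : RC N i j xi xj p q r s) :
    ∀ (a' v' : (N.retCherryReduce xi xj p q).V) (l' : List (N.retCherryReduce xi xj p q).V),
      (N.retCherryReduce xi xj p q).IsPath a' v' l' → v'.1 ≠ xi → v'.1 ≠ xj →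
      N.IsPath a'.1 v'.1 (l'.map Subtype.val) := by
  intro a' v' l' hl'
  induction hl' with
  | nil => intro _ _; exact .nil _
  | @cons a b w l ha hp' ih =>
    intro h3 h4
    have harc : N.arc a.1 b.1 := by
      rcases ha with ha' | ⟨hap, hbxi⟩ | ⟨haq, hbxj⟩
      · exact ha'
      · exfalso
        cases hp' with
        | nil => exact h3 hbxi
        | cons hbc _ =>
          rcases hbc with h' | ⟨h', _⟩ | ⟨h', _⟩ <;>
            · rw [hbxi] at h'
              exact c.nxi _ h'
      · exfalso
        cases hp' with
        | nil => exact h4 hbxj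
        | cons hbc _ =>
          rcases hbc with h' | ⟨h', _⟩ | ⟨h', _⟩ <;>
            · rw [hbxj] at h'
              exact c.nxj _ h'
    exact .cons harc (ih h3 h4)

lemma RC.liftA (c : RC N i j xi xj p q r s) :
    ∀ (u v : N.V) (l : List N.V), N.IsPath u v l → v ≠ p → v ≠ q → v ≠ xi → v ≠ xj →
      ∀ (hu : u ≠ p ∧ u ≠ q) (hv : v ≠ p ∧ v ≠ q),
      ∃ l' : List (N.retCherryReduce xi xj p q).V,
        (N.retCherryReduce xi xj p q).IsPath ⟨u, hu⟩ ⟨v, hv⟩ l' ∧ l'.map Subtype.val = l := by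
  intro u v l hl
  induction hl with
  | nil => intro _ _ _ _ hu hv; exact ⟨[], .nil _, rfl⟩
  | @cons a b w l ha hp' ih =>
    intro h1 h2 h3 h4 hu hv
    have hb4 := c.avoid a w (b :: l) (.cons ha hp') h1 h2 h3 h4 b List.mem_cons_self
    obtain ⟨l', hl', hmap⟩ := ih h1 h2 h3 h4 ⟨hb4.1, hb4.2.1⟩ hv
    exact ⟨⟨b, ⟨hb4.1, hb4.2.1⟩⟩ :: l', .cons (Or.inl ha) hl', congrArg (List.cons b) hmap⟩

lemma RC.mA (c : RC N i j xi xj p q r s) :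
    ∀ (u v : N.V) (hu : u ≠ p ∧ u ≠ q) (hv : v ≠ p ∧ v ≠ q), v ≠ xi → v ≠ xj →
      (N.retCherryReduce xi xj p q).m ⟨u, hu⟩ ⟨v, hv⟩ = N.m u v := by
  intro u v hu hv h3 h4
  refine Nat.card_eq_of_bijective
    (fun l' => ⟨l'.1.map Subtype.val, c.proj _ _ _ l'.2 h3 h4⟩) ⟨?_, ?_⟩
  · rintro ⟨l1, hl1⟩ ⟨l2, hl2⟩ he
    simp only [Subtype.mk.injEq] at he ⊢
    exact List.map_injective_iff.2 Subtype.val_injective he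
  · rintro ⟨l, hl⟩
    obtain ⟨l', hl', hmap⟩ := c.liftA u v l hl hv.1 hv.2 h3 h4 hu hv
    exact ⟨⟨l', hl'⟩, Subtype.ext hmap⟩

lemma RC.noout'xi (c : RC N i j xi xj p q r s) (hh : xi ≠ p ∧ xi ≠ q) :
    ∀ b : (N.retCherryReduce xi xj p q).V, ¬ (N.retCherryReduce xi xj p q).arc ⟨xi, hh⟩ b := by
  rintro b (h' | ⟨h', _⟩ | ⟨h', _⟩) <;> exact c.nxi _ h'

lemma RC.noout'xj (c : RC N i j xi xj p q r s) (hh : xj ≠ p ∧ xj ≠ q) :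
    ∀ b : (N.retCherryReduce xi xj p q).V, ¬ (N.retCherryReduce xi xj p q).arc ⟨xj, hh⟩ b := by
  rintro b (h' | ⟨h', _⟩ | ⟨h', _⟩) <;> exact c.nxj _ h'

lemma RC.upar'xi (c : RC N i j xi xj p q r s) (hh : xi ≠ p ∧ xi ≠ q) (hr : r ≠ p ∧ r ≠ q) :
    ∀ z : (N.retCherryReduce xi xj p q).V,
      (N.retCherryReduce xi xj p q).arc z ⟨xi, hh⟩ → z = ⟨r, hr⟩ := by
  rintro ⟨z, hz⟩ (h' | ⟨h', _⟩ | ⟨_, h'⟩)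
  · exact absurd (c.uxi _ h') hz.1
  · rcases c.upar _ h' with he | he
    · exact absurd he hz.2
    · exact Subtype.ext he
  · exact (c.hne (by simpa using h')).elim

lemma RC.upar'xj (c : RC N i j xi xj p q r s) (hh : xj ≠ p ∧ xj ≠ q) (hs : s ≠ p ∧ s ≠ q) :
    ∀ z : (N.retCherryReduce xi xj p q).V,
      (N.retCherryReduce xi xj p q).arc z ⟨xj, hh⟩ → z = ⟨s, hs⟩ := by
  rintro ⟨z, hz⟩ (h' | ⟨_, h'⟩ | ⟨h', _⟩)
  · exact absurd (c.uxj _ h') hz.2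
  · exact (c.hne (by simpa using h'.symm)).elim
  · exact Subtype.ext (c.usq _ h')

lemma RC.mB (c : RC N i j xi xj p q r s) :
    ∀ (u : N.V) (hu : u ≠ p ∧ u ≠ q) (hh : xj ≠ p ∧ xj ≠ q),
      (N.retCherryReduce xi xj p q).m ⟨u, hu⟩ ⟨xj, hh⟩ = N.m u xj := by
  intro u hu hh
  by_cases huj : u = xj
  · subst huj
    rw [m_self_of_no_out c.nxj, m_self_of_no_out (c.noout'xj hu)]
  · have hs : s ≠ p ∧ s ≠ q := ⟨c.sP, c.sQ⟩
    have e1 : N.m u xj = N.m u q := m_eq_of_unique_parent huj c.hqxj c.uxj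
    have e2 : N.m u q = N.m u s := m_eq_of_unique_parent hu.2 c.hsq c.usq
    have e3 : (N.retCherryReduce xi xj p q).m ⟨u, hu⟩ ⟨xj, hh⟩
        = (N.retCherryReduce xi xj p q).m ⟨u, hu⟩ ⟨s, hs⟩ := by
      refine m_eq_of_unique_parent ?_ ?_ (c.upar'xj hh hs)
      · intro he
        exact huj (congrArg Subtype.val he)
      · exact Or.inr (Or.inr ⟨c.hsq, rfl⟩)
    rw [e3, c.mA u s hu hs c.sxi c.sxj, e1, e2]

end BPN

namespace BPN

variable {n : ℕ} {N : BPN n} {i j : Fin (n + 1)} {xi xj p q r s : N.V}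

lemma RC.finite_to_r (c : RC N i j xi xj p q r s) {u : N.V} (huu : ¬ N.arc u u) :
    Finite {l : List N.V // N.IsPath u r l} := by
  by_cases hrr : N.arc r r
  · have hur : u ≠ r := fun he => huu (he ▸ hrr)
    have honly : ∀ z, N.arc z r → z = r := by
      rcases c.valid.2.1 r with hr | hr | hr | hr
      · exact absurd hrr (no_in_of_indeg_zero hr.1 r)
      · exact absurd hrr (no_out_of_outdeg_zero hr.2 r)
      · exact parent_unique hr.1 hrr
      · exact absurd (child_unique hr.2 hrr p c.hrp) c.hrP.symm
    have : IsEmpty {l : List N.V // N.IsPath u r l} :=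
      ⟨fun l => no_path_of_only_self_parent hur honly l.1 l.2⟩
    exact Finite.of_subsingleton
  · exact finite_paths c.valid huu hrr

lemma RC.split_p (c : RC N i j xi xj p q r s) {u : N.V} (hup : u ≠ p) (huu : ¬ N.arc u u) :
    N.m u p = N.m u q + N.m u r := by
  have hfq : Finite {l : List N.V // N.IsPath u q l} := finite_paths c.valid huu c.nqq
  have hfr := c.finite_to_r huu
  exact m_eq_add_of_two_parents hup (Ne.symm c.hrq) c.hqp c.hrp c.upar hfq hfr

lemma RC.mC (c : RC N i j xi xj p q r s) :
    ∀ (u : N.V) (hu : u ≠ p ∧ u ≠ q) (hh : xi ≠ p ∧ xi ≠ q),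
      (N.retCherryReduce xi xj p q).m ⟨u, hu⟩ ⟨xi, hh⟩ = N.m u xi - N.m u xj := by
  intro u hu hh
  by_cases huu : N.arc u u
  · rw [m_eq_zero_of_loop (M := N.retCherryReduce xi xj p q) (u := ⟨u, hu⟩) (v := ⟨xi, hh⟩) (Or.inl huu), m_eq_zero_of_loop huu, m_eq_zero_of_loop huu]
  by_cases hui : u = xi
  · subst hui
    rw [m_self_of_no_out c.nxi, m_self_of_no_out (c.noout'xi hu),
      m_eq_zero_of_no_out c.hne c.nxi]
  by_cases huj : u = xj
  · subst huj
    rw [m_self_of_no_out c.nxj, m_eq_zero_of_no_out (Ne.symm c.hne) c.nxj,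
      m_eq_zero_of_no_out (fun he => c.hne (congrArg Subtype.val he).symm) (c.noout'xj hu)]
  · have hr : r ≠ p ∧ r ≠ q := ⟨c.hrP, c.hrq⟩
    have e1 : N.m u xi = N.m u p := m_eq_of_unique_parent hui c.hpxi c.uxi
    have e2 : N.m u xj = N.m u q := m_eq_of_unique_parent huj c.hqxj c.uxj
    have e4 : (N.retCherryReduce xi xj p q).m ⟨u, hu⟩ ⟨xi, hh⟩
        = (N.retCherryReduce xi xj p q).m ⟨u, hu⟩ ⟨r, hr⟩ := by
      refine m_eq_of_unique_parent ?_ ?_ (c.upar'xi hh hr)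
      · exact fun he => hui (congrArg Subtype.val he)
      · exact Or.inr (Or.inl ⟨c.hrp, rfl⟩)
    rw [e4, c.mA u r hu hr c.rxi c.rxj, e1, e2, c.split_p hu.1 huu, Nat.add_sub_cancel_left]

end BPN

namespace BPN

variable {n : ℕ} {N : BPN n} {i j : Fin (n + 1)} {xi xj p q r s : N.V}

lemma RC.xiV (c : RC N i j xi xj p q r s) : xi ≠ p ∧ xi ≠ q := ⟨c.pxi.symm, c.qxi.symm⟩
lemma RC.xjV (c : RC N i j xi xj p q r s) : xj ≠ p ∧ xj ≠ q := ⟨c.pxj.symm, c.qxj.symm⟩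
lemma RC.rV (c : RC N i j xi xj p q r s) : r ≠ p ∧ r ≠ q := ⟨c.hrP, c.hrq⟩
lemma RC.sV (c : RC N i j xi xj p q r s) : s ≠ p ∧ s ≠ q := ⟨c.sP, c.sQ⟩

lemma RC.indeg' (c : RC N i j xi xj p q r s) (v : N.V) (hv : v ≠ p ∧ v ≠ q) :
    (N.retCherryReduce xi xj p q).indeg ⟨v, hv⟩ = N.indeg v := by
  by_cases hvi : v = xi
  · subst hvi
    rw [c.hxi.1]; show Nat.card _ = 1
    exact Nat.card_eq_one_iff_exists.2
      ⟨⟨⟨r, c.rV⟩, Or.inr (Or.inl ⟨c.hrp, rfl⟩)⟩,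
        fun y => Subtype.ext (c.upar'xi hv c.rV y.1 y.2)⟩
  by_cases hvj : v = xj
  · subst hvj
    rw [c.hxj.1]; show Nat.card _ = 1
    exact Nat.card_eq_one_iff_exists.2
      ⟨⟨⟨s, c.sV⟩, Or.inr (Or.inr ⟨c.hsq, rfl⟩)⟩,
        fun y => Subtype.ext (c.upar'xj hv c.sV y.1 y.2)⟩
  · refine Nat.card_eq_of_bijective (fun w => ⟨w.1.1, ?_⟩) ⟨?_, ?_⟩
    · rcases w.2 with h' | ⟨_, h'⟩ | ⟨_, h'⟩
      · exact h'
      · exact absurd h' hvi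
      · exact absurd h' hvj
    · rintro ⟨⟨w1, hw1⟩, h1⟩ ⟨⟨w2, hw2⟩, h2⟩ he
      simp only [Subtype.mk.injEq] at he ⊢
      exact Subtype.ext (Subtype.ext he)
    · rintro ⟨w, hw⟩
      have hwp : w ≠ p := fun he => hvi (c.cp v (he ▸ hw))
      have hwq : w ≠ q := by
        intro he
        rcases c.cq v (he ▸ hw) with h' | h'
        · exact hv.1 h'
        · exact hvj h'
      exact ⟨⟨⟨w, hwp, hwq⟩, Or.inl hw⟩, rfl⟩

lemma RC.outdeg' (c : RC N i j xi xj p q r s) (w : N.V) (hw : w ≠ p ∧ w ≠ q) :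
    (N.retCherryReduce xi xj p q).outdeg ⟨w, hw⟩ = N.outdeg w := by
  show Nat.card _ = Nat.card _
  refine (Nat.card_eq_of_bijective (fun y : {v : N.V // N.arc w v} =>
    if hp' : y.1 = p then
      (⟨⟨xi, c.xiV⟩, Or.inr (Or.inl ⟨hp' ▸ y.2, rfl⟩)⟩ :
        {v' // (N.retCherryReduce xi xj p q).arc ⟨w, hw⟩ v'})
    else if hq' : y.1 = q then
      ⟨⟨xj, c.xjV⟩, Or.inr (Or.inr ⟨hq' ▸ y.2, rfl⟩)⟩
    else ⟨⟨y.1, hp', hq'⟩, Or.inl y.2⟩) ⟨?_, ?_⟩).symm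
  · rintro ⟨y1, hy1⟩ ⟨y2, hy2⟩ he
    by_cases h1 : y1 = p <;> by_cases h2 : y2 = p
    · exact Subtype.ext (h1.trans h2.symm)
    · simp only [dif_pos h1, dif_neg h2] at he
      by_cases h2' : y2 = q
      · simp only [dif_pos h2'] at he
        exact absurd (congrArg (fun z => z.1.1) he) c.hne
      · simp only [dif_neg h2'] at he
        have : xi = y2 := congrArg (fun z => z.1.1) he
        exact absurd (c.uxi w (this ▸ hy2)) hw.1
    · simp only [dif_neg h1, dif_pos h2] at he
      by_cases h1' : y1 = q
      · simp only [dif_pos h1'] at he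
        exact absurd (congrArg (fun z => z.1.1) he) c.hne.symm
      · simp only [dif_neg h1'] at he
        have hx : y1 = xi := congrArg (fun z => z.1.1) he
        exact absurd (c.uxi w (hx ▸ hy1)) hw.1
    · simp only [dif_neg h1, dif_neg h2] at he
      by_cases h1' : y1 = q <;> by_cases h2' : y2 = q
      · exact Subtype.ext (h1'.trans h2'.symm)
      · simp only [dif_pos h1', dif_neg h2'] at he
        have : xj = y2 := congrArg (fun z => z.1.1) he
        exact absurd (c.uxj w (this ▸ hy2)) hw.2
      · simp only [dif_neg h1', dif_pos h2'] at he
        have : y1 = xj := congrArg (fun z => z.1.1) he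
        exact absurd (c.uxj w (this ▸ hy1)) hw.2
      · simp only [dif_neg h1', dif_neg h2'] at he
        exact Subtype.ext (congrArg (fun z => z.1.1) he)
  · rintro ⟨⟨v, hv⟩, harc⟩
    rcases harc with h' | ⟨h', he⟩ | ⟨h', he⟩
    · refine ⟨⟨v, h'⟩, ?_⟩
      simp only [dif_neg hv.1, dif_neg hv.2]
    · refine ⟨⟨p, h'⟩, ?_⟩
      simp only [dif_pos rfl]
      exact Subtype.ext (Subtype.ext he.symm)
    · refine ⟨⟨q, h'⟩, ?_⟩
      simp only [dif_neg (Ne.symm c.hpq), dif_pos rfl]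
      exact Subtype.ext (Subtype.ext he.symm)

lemma RC.isLeaf' (c : RC N i j xi xj p q r s) (v : N.V) (hv : v ≠ p ∧ v ≠ q) :
    (N.retCherryReduce xi xj p q).isLeaf ⟨v, hv⟩ ↔ N.isLeaf v := by
  show _ ∧ _ ↔ _ ∧ _; rw [c.indeg' v hv, c.outdeg' v hv]

lemma RC.isTree' (c : RC N i j xi xj p q r s) (v : N.V) (hv : v ≠ p ∧ v ≠ q) :
    (N.retCherryReduce xi xj p q).isTree ⟨v, hv⟩ ↔ N.isTree v := by
  show _ ∧ _ ↔ _ ∧ _; rw [c.indeg' v hv, c.outdeg' v hv]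

lemma RC.isRetic' (c : RC N i j xi xj p q r s) (v : N.V) (hv : v ≠ p ∧ v ≠ q) :
    (N.retCherryReduce xi xj p q).isRetic ⟨v, hv⟩ ↔ N.isRetic v := by
  show _ ∧ _ ↔ _ ∧ _; rw [c.indeg' v hv, c.outdeg' v hv]

lemma RC.isVT' (c : RC N i j xi xj p q r s) (v : N.V) (hv : v ≠ p ∧ v ≠ q) :
    (N.retCherryReduce xi xj p q).isVT ⟨v, hv⟩ ↔ N.isVT v := by
  show _ ∨ _ ↔ _ ∨ _; rw [c.isLeaf' v hv, c.isTree' v hv]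

end BPN

namespace BPN

variable {n : ℕ} {N : BPN n} {i j : Fin (n + 1)} {xi xj p q r s : N.V}

lemma RC.leaf_npq (c : RC N i j xi xj p q r s) {v : N.V} (hv : N.isLeaf v) :
    v ≠ p ∧ v ≠ q := by
  constructor
  · intro he
    have h1 := hv.2
    rw [he, c.hp.2] at h1
    norm_num at h1
  · intro he
    have h1 := hv.2
    rw [he, c.hq.2] at h1
    norm_num at h1

lemma RC.retic_facts (c : RC N i j xi xj p q r s) {h : N.V} (hr : N.isRetic h) :
    h ≠ q ∧ h ≠ xi ∧ h ≠ xj := by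
  refine ⟨?_, ?_, ?_⟩
  · intro he
    have h1 := hr.1
    rw [he, c.hq.1] at h1
    norm_num at h1
  · intro he
    have h1 := hr.2
    rw [he, c.hxi.2] at h1
    norm_num at h1
  · intro he
    have h1 := hr.2
    rw [he, c.hxj.2] at h1
    norm_num at h1

open Classical in
lemma RC.filter_i (c : RC N i j xi xj p q r s) :
    (Finset.univ.filter fun v : N.V => N.isLeaf v ∧ N.label v = ((i : ℕ))) = {xi} := by
  ext v
  simp only [Finset.mem_filter, Finset.mem_univ, true_and, Finset.mem_singleton]
  constructor
  · rintro ⟨h1, h2⟩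
    exact c.lli v h1 h2
  · rintro rfl
    exact ⟨c.hxi, c.hlxi⟩

open Classical in
lemma RC.filter_j (c : RC N i j xi xj p q r s) :
    (Finset.univ.filter fun v : N.V => N.isLeaf v ∧ N.label v = ((j : ℕ))) = {xj} := by
  ext v
  simp only [Finset.mem_filter, Finset.mem_univ, true_and, Finset.mem_singleton]
  constructor
  · rintro ⟨h1, h2⟩
    exact c.llj v h1 h2
  · rintro rfl
    exact ⟨c.hxj, c.hlxj⟩

open Classical in
lemma RC.filter_i' (c : RC N i j xi xj p q r s) :
    (Finset.univ.filter fun v : (N.retCherryReduce xi xj p q).V =>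
        (N.retCherryReduce xi xj p q).isLeaf v ∧
          (N.retCherryReduce xi xj p q).label v = ((i : ℕ)))
      = {⟨xi, c.xiV⟩} := by
  ext v
  simp only [Finset.mem_filter, Finset.mem_univ, true_and, Finset.mem_singleton]
  obtain ⟨v, hv⟩ := v
  constructor
  · rintro ⟨h1, h2⟩
    obtain rfl := c.lli v ((c.isLeaf' v hv).1 h1) h2
    exact Finset.mem_singleton_self _
  · intro he
    obtain rfl : v = xi := congrArg Subtype.val (Finset.mem_singleton.1 he)
    exact ⟨(c.isLeaf' v hv).2 c.hxi, c.hlxi⟩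

open Classical in
lemma RC.mu_i (c : RC N i j xi xj p q r s) (u : N.V) (hu : u ≠ p ∧ u ≠ q) :
    (N.retCherryReduce xi xj p q).mu ⟨u, hu⟩ i = N.mu u i - N.mu u j := by
  simp only [mu, if_neg c.i0, if_neg c.j0]
  rw [c.filter_i, c.filter_j, c.filter_i', Finset.sum_singleton, Finset.sum_singleton]
  exact (Finset.sum_singleton _ _).trans (c.mC u hu c.xiV)

open Classical in
lemma RC.mu_0 (c : RC N i j xi xj p q r s) (u : N.V) (hu : u ≠ p ∧ u ≠ q) :
    (N.retCherryReduce xi xj p q).mu ⟨u, hu⟩ 0 = N.mu u 0 - N.mu u i := by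
  simp only [mu, eq_self_iff_true, if_true, if_neg c.i0]
  rw [c.filter_i, Finset.sum_singleton]
  have hpmem : p ∈ Finset.univ.filter (fun h => N.isRetic h) :=
    Finset.mem_filter.2 ⟨Finset.mem_univ p, c.hp⟩
  rw [← Finset.add_sum_erase _ _ hpmem]
  have hS : (∑ h ∈ Finset.univ.filter (fun h => (N.retCherryReduce xi xj p q).isRetic h),
        (N.retCherryReduce xi xj p q).m ⟨u, hu⟩ h)
      = ∑ h ∈ (Finset.univ.filter (fun h => N.isRetic h)).erase p, N.m u h := by
    refine Finset.sum_bij' (fun a _ => a.1) (fun b hb => ⟨b, ?_, ?_⟩) ?_ ?_ ?_ ?_ ?_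
    · exact (Finset.mem_erase.1 hb).1
    · exact (c.retic_facts (Finset.mem_filter.1 (Finset.mem_erase.1 hb).2).2).1
    · intro a ha
      obtain ⟨v, hv⟩ := a
      have hra := (Finset.mem_filter.1 ha).2
      rw [Finset.mem_erase]
      exact ⟨hv.1, Finset.mem_filter.2 ⟨Finset.mem_univ v, (c.isRetic' v hv).1 hra⟩⟩
    · intro b hb
      have hrb := (Finset.mem_filter.1 (Finset.mem_erase.1 hb).2).2
      exact Finset.mem_filter.2 ⟨Finset.mem_univ _,
        (c.isRetic' b _).2 hrb⟩
    · intro a ha; rfl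
    · intro b hb; rfl
    · intro a ha
      obtain ⟨v, hv⟩ := a
      have hra := (c.isRetic' v hv).1 (Finset.mem_filter.1 ha).2
      exact c.mA u v hu hv (c.retic_facts hra).2.1 (c.retic_facts hra).2.2
  rw [hS]
  by_cases hui : u = xi
  · subst u
    have z1 : N.m xi p = 0 := m_eq_zero_of_no_out c.pxi.symm c.nxi
    have z2 : ∑ h ∈ (Finset.univ.filter (fun h => N.isRetic h)).erase p, N.m xi h = 0 := by
      refine Finset.sum_eq_zero ?_
      intro h hh
      have hr := (Finset.mem_filter.1 (Finset.mem_erase.1 hh).2).2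
      exact m_eq_zero_of_no_out (Ne.symm (c.retic_facts hr).2.1) c.nxi
    rw [z1, z2, m_self_of_no_out c.nxi]
    omega
  · rw [m_eq_of_unique_parent hui c.hpxi c.uxi, Nat.add_sub_cancel_left]

open Classical in
lemma RC.mu_k (c : RC N i j xi xj p q r s) (k : Fin (n + 1)) (k0 : k ≠ 0) (ki : k ≠ i)
    (u : N.V) (hu : u ≠ p ∧ u ≠ q) :
    (N.retCherryReduce xi xj p q).mu ⟨u, hu⟩ k = N.mu u k := by
  simp only [mu, if_neg k0]
  refine Finset.sum_bij' (fun a _ => a.1) (fun b hb => ⟨b, c.leaf_npq (Finset.mem_filter.1 hb).2.1⟩)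
    ?_ ?_ ?_ ?_ ?_
  · intro a ha
    obtain ⟨v, hv⟩ := a
    have h1 := (Finset.mem_filter.1 ha).2
    exact Finset.mem_filter.2 ⟨Finset.mem_univ v, ⟨(c.isLeaf' v hv).1 h1.1, h1.2⟩⟩
  · intro b hb
    have h1 := (Finset.mem_filter.1 hb).2
    exact Finset.mem_filter.2 ⟨Finset.mem_univ _, ⟨(c.isLeaf' b _).2 h1.1, h1.2⟩⟩
  · intro a ha; rfl
  · intro b hb; rfl
  · intro a ha
    obtain ⟨v, hv⟩ := a
    have h1 := (Finset.mem_filter.1 ha).2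
    have hvxi : v ≠ xi := by
      intro he
      have h2 : N.label v = ((k : ℕ)) := h1.2
      rw [he, c.hlxi] at h2
      exact ki (Fin.val_injective h2.symm)
    by_cases hvxj : v = xj
    · subst hvxj
      exact c.mB u hu hv
    · exact c.mA u v hu hv hvxi hvxj
  
end BPN

namespace BPN

variable {n : ℕ} {N : BPN n} {i j : Fin (n + 1)} {xi xj p q r s : N.V}

lemma RC.m_qq (c : RC N i j xi xj p q r s) : N.m q q = 1 :=
  m_self_eq_one c.valid.1 c.nqq

lemma RC.m_qr (c : RC N i j xi xj p q r s) : N.m q r = 0 :=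
  m_eq_zero_of_no_path fun l => c.Lq r l c.hrq c.hrP c.rxi c.rxj

lemma RC.m_qp (c : RC N i j xi xj p q r s) : N.m q p = 1 := by
  have hfq : Finite {l : List N.V // N.IsPath q q l} := finite_paths c.valid c.nqq c.nqq
  have hfr : Finite {l : List N.V // N.IsPath q r l} := by
    have : IsEmpty {l : List N.V // N.IsPath q r l} :=
      ⟨fun l => c.Lq r l.1 c.hrq c.hrP c.rxi c.rxj l.2⟩
    exact Finite.of_subsingleton
  rw [m_eq_add_of_two_parents c.hpq.symm (Ne.symm c.hrq) c.hqp c.hrp c.upar hfq hfr,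
    c.m_qq, c.m_qr]

open Classical in
lemma RC.mu_q (c : RC N i j xi xj p q r s) : N.mu q = delta {0, i, j} := by
  funext k
  by_cases hk0 : k = 0
  · subst hk0
    simp only [mu, eq_self_iff_true, if_true, delta]
    rw [if_pos (by simp)]
    have hpmem : p ∈ Finset.univ.filter (fun h => N.isRetic h) :=
      Finset.mem_filter.2 ⟨Finset.mem_univ p, c.hp⟩
    rw [← Finset.add_sum_erase _ _ hpmem, c.m_qp]
    have z2 : ∑ h ∈ (Finset.univ.filter (fun h => N.isRetic h)).erase p, N.m q h = 0 := by
      refine Finset.sum_eq_zero ?_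
      intro h hh
      have hr := (Finset.mem_filter.1 (Finset.mem_erase.1 hh).2).2
      exact m_eq_zero_of_no_path fun l =>
        c.Lq h l (c.retic_facts hr).1 (Finset.mem_erase.1 hh).1
          (c.retic_facts hr).2.1 (c.retic_facts hr).2.2
    rw [z2]
  by_cases hki : k = i
  · subst hki
    simp only [mu, if_neg c.i0, delta]
    rw [if_pos (by simp), c.filter_i, Finset.sum_singleton,
      m_eq_of_unique_parent c.qxi c.hpxi c.uxi, c.m_qp]
  by_cases hkj : k = j
  · subst hkj
    simp only [mu, if_neg c.j0, delta]
    rw [if_pos (by simp), c.filter_j, Finset.sum_singleton,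
      m_eq_of_unique_parent c.qxj c.hqxj c.uxj, c.m_qq]
  · simp only [mu, if_neg hk0, delta]
    rw [if_neg (by simp [hk0, hki, hkj])]
    refine Finset.sum_eq_zero ?_
    intro v hv
    have h1 := (Finset.mem_filter.1 hv).2
    have hvxi : v ≠ xi := by
      intro he
      rw [he, c.hlxi] at h1
      exact hki (Fin.val_injective h1.2.symm)
    have hvxj : v ≠ xj := by
      intro he
      rw [he, c.hlxj] at h1
      exact hkj (Fin.val_injective h1.2.symm)
    have hnpq := c.leaf_npq h1.1
    exact m_eq_zero_of_no_path fun l =>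
      c.Lq v l hnpq.2 hnpq.1 hvxi hvxj

end BPN

namespace BPN

/-- for a reticulated-cherry `(i,j)` with parents `p, q` of the
leaves `xi, xj`, every tree node `u ≠ q` of `N` survives in `N^{(i,j)}` with
`μ'_i(u) = μ_i(u) − μ_j(u)`, `μ'_0(u) = μ_0(u) − μ_i(u)`, and the other
coordinates unchanged; hence `𝛍(N^{(i,j)}) = 𝛍(N)^{(i,j)}`. -/
theorem stmt11 {n : ℕ} (N : BPN n) (hN : N.Valid) (i j : Fin (n + 1))
    (xi xj p q : N.V) (h : N.IsRetCherry i j xi xj p q) :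
    (∀ (u : N.V) (hu : u ≠ p ∧ u ≠ q), N.isTree u →
      (N.retCherryReduce xi xj p q).mu ⟨u, hu⟩ i = N.mu u i - N.mu u j ∧
      (N.retCherryReduce xi xj p q).mu ⟨u, hu⟩ 0 = N.mu u 0 - N.mu u i ∧
      ∀ k : Fin (n + 1), k ≠ 0 → k ≠ i →
        (N.retCherryReduce xi xj p q).mu ⟨u, hu⟩ k = N.mu u k) ∧
    (N.retCherryReduce xi xj p q).muRep = retCherryRed i j N.muRep := by
  classical
  obtain ⟨r, s, c⟩ := mkRC hN h
  constructor
  · intro u hu _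
    exact ⟨c.mu_i u hu, c.mu_0 u hu, fun k k0 ki => c.mu_k k k0 ki u hu⟩
  · have hqVT : q ∈ Finset.univ.filter (fun v => N.isVT v) :=
      Finset.mem_filter.2 ⟨Finset.mem_univ q, Or.inr c.hq⟩
    rw [retCherryRed, muRep, muRep]
    have hsplit : (Finset.univ.filter (fun v => N.isVT v)).val.map N.mu
        = N.mu q ::ₘ (((Finset.univ.filter (fun v => N.isVT v)).erase q).val.map N.mu) := by
      conv_lhs => rw [← Finset.insert_erase hqVT]
      rw [Finset.insert_val_of_notMem (Finset.notMem_erase _ _), Multiset.map_cons]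
    rw [hsplit, c.mu_q, Multiset.erase_cons_head]
    have hmap : ((Finset.univ.filter (fun v => (N.retCherryReduce xi xj p q).isVT v)).map
          (⟨Subtype.val, Subtype.val_injective⟩ : (N.retCherryReduce xi xj p q).V ↪ N.V))
        = (Finset.univ.filter (fun v => N.isVT v)).erase q := by
      ext a
      simp only [Finset.mem_map, Finset.mem_filter, Finset.mem_univ, true_and,
        Finset.mem_erase, Function.Embedding.coeFn_mk]
      constructor
      · rintro ⟨⟨v, hv⟩, hvt, rfl⟩
        exact ⟨hv.2, (c.isVT' v hv).1 hvt⟩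
      · rintro ⟨haq, havt⟩
        have hap : a ≠ p := by
          intro he
          rcases havt with hl | ht
          · exact absurd he (c.leaf_npq hl).1
          · have h1 := ht.2
            rw [he, c.hp.2] at h1
            norm_num at h1
        exact ⟨⟨a, hap, haq⟩, (c.isVT' a ⟨hap, haq⟩).2 havt, rfl⟩
    rw [← hmap, Finset.map_val, Multiset.map_map, Multiset.map_map]
    refine Multiset.map_congr rfl ?_
    rintro ⟨v, hv⟩ hv'
    funext k
    show _ = (if k = 0 then N.mu v 0 - N.mu v i else if k = i then N.mu v i - N.mu v j else N.mu v k)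
    by_cases hk0 : k = 0
    · subst hk0
      rw [if_pos rfl]
      exact c.mu_0 v hv
    by_cases hki : k = i
    · subst hki
      rw [if_neg c.i0, if_pos rfl]
      exact c.mu_i v hv
    · rw [if_neg hk0, if_neg hki]
      exact c.mu_k k hk0 hki v hv

end BPN
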